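/- Let 1 < p, q < ∞, X = ℓ^p(ℓ^q), s = max{p', q'}, and c₁ = min{1/p, 1/q}. Then for every nonzero x ∈ X and every pair (j,k), dist(x, span{e_{j,k}}) ≤ ‖x‖·(1 − c₁ |F_x(e_{j,k})|^s), where e_{j,k} is the canonical basis vector and F_x is the norming functional of x. -/
import Mathlib

/-- The mixed norm of `ℓ^p(ℓ^q)`. -/
noncomputable def lpqNorm (p q : ℝ) {𝕜 : Type*} [RCLike 𝕜] (x : ℕ → ℕ → 𝕜) : ℝ :=
  (∑' j, (∑' k, ‖x j k‖ ^ q) ^ (p / q)) ^ (1 / p)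

/-- `Δ_j(x) = (Σ_k |x_{j,k}|^q)^{1/q}`. -/
noncomputable def lpqDelta (q : ℝ) {𝕜 : Type*} [RCLike 𝕜] (x : ℕ → ℕ → 𝕜) (j : ℕ) : ℝ :=
  (∑' k, ‖x j k‖ ^ q) ^ (1 / q)

private lemma bern_le_one (r v : ℝ) (hr0 : 0 < r) (hv0 : 0 ≤ v) (hv1 : v ≤ 1) :
    (1 - v) ^ r ≤ 1 - min 1 r * v := by
  rcases le_total r 1 with hr1 | hr1
  · rw [min_eq_right hr1]
    have := rpow_one_add_le_one_add_mul_self (s := -v) (by linarith) hr0.le hr1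
    simpa [sub_eq_add_neg, mul_neg] using this
  · rw [min_eq_left hr1]
    rcases eq_or_lt_of_le hv1 with h | h
    · rw [h]; simp [Real.zero_rpow hr0.ne']
    · calc (1 - v) ^ r ≤ (1 - v) ^ (1 : ℝ) :=
            Real.rpow_le_rpow_of_exponent_ge (by linarith) (by linarith) hr1
        _ = 1 - 1 * v := by rw [Real.rpow_one]; ring

theorem stmt_7 {𝕜 : Type*} [RCLike 𝕜] (p q p' q' : ℝ) (hp : 1 < p) (hq : 1 < q)
    (hp' : 1 / p + 1 / p' = 1) (hq' : 1 / q + 1 / q' = 1)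
    (x : ℕ → ℕ → 𝕜) (hx : x ≠ 0)
    (hx1 : ∀ j, Summable fun k => ‖x j k‖ ^ q)
    (hx2 : Summable fun j => (∑' k, ‖x j k‖ ^ q) ^ (p / q))
    (j k : ℕ) :
    (⨅ lam : 𝕜, lpqNorm p q fun j' k' => x j' k' - if j' = j ∧ k' = k then lam else 0) ≤
      lpqNorm p q x * (1 - min (1 / p) (1 / q) *
        (lpqDelta q x j ^ (p - q) * ‖x j k‖ ^ (q - 1) / lpqNorm p q x ^ (p - 1))
          ^ max p' q') := by
  have hp0 : (0:ℝ) < p := by linarith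
  have hq0 : (0:ℝ) < q := by linarith
  have hp'0 : (0:ℝ) < p' := by
    have h2 : 1 / p < 1 := (div_lt_one hp0).mpr hp
    exact one_div_pos.mp (by linarith)
  have hq'0 : (0:ℝ) < q' := by
    have h2 : 1 / q < 1 := (div_lt_one hq0).mpr hq
    exact one_div_pos.mp (by linarith)
  have hnn : ∀ y : ℕ → ℕ → 𝕜, 0 ≤ lpqNorm p q y := fun y =>
    Real.rpow_nonneg (tsum_nonneg fun _ => Real.rpow_nonneg (tsum_nonneg fun _ =>
      Real.rpow_nonneg (norm_nonneg _) _) _) _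
  have hbdd : BddBelow (Set.range fun lam : 𝕜 =>
      lpqNorm p q fun j' k' => x j' k' - if j' = j ∧ k' = k then lam else 0) :=
    ⟨0, by rintro _ ⟨lam, rfl⟩; exact hnn _⟩
  set a : ℝ := ∑' k', ‖x j k'‖ ^ q with ha_def
  set A : ℝ := ∑' j', (∑' k', ‖x j' k'‖ ^ q) ^ (p / q) with hA_def
  have hs_pos : 0 < max p' q' := lt_max_of_lt_left hp'0
  by_cases hc : x j k = 0
  · have h0 : (lpqDelta q x j ^ (p - q) * ‖x j k‖ ^ (q - 1) / lpqNorm p q x ^ (p - 1)) = 0 := by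
      rw [hc, norm_zero, Real.zero_rpow (show q - 1 ≠ 0 by intro h; linarith [sub_eq_zero.mp h]),
        mul_zero, zero_div]
    rw [h0, Real.zero_rpow hs_pos.ne', mul_zero, sub_zero, mul_one]
    refine le_trans (ciInf_le hbdd (0 : 𝕜)) ?_
    simp [lpqNorm]
  -- main case
  have hcpos : 0 < ‖x j k‖ := norm_pos_iff.mpr hc
  set c : ℝ := ‖x j k‖ with hc_def
  have hbpos : (0:ℝ) < c ^ q := Real.rpow_pos_of_pos hcpos q
  have hba : c ^ q ≤ a := Summable.le_tsum (hx1 j) k (fun _ _ => Real.rpow_nonneg (norm_nonneg _) q)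
  have ha_pos : 0 < a := lt_of_lt_of_le hbpos hba
  have haA : a ^ (p/q) ≤ A :=
    Summable.le_tsum hx2 j (fun _ _ => Real.rpow_nonneg (tsum_nonneg fun _ =>
      Real.rpow_nonneg (norm_nonneg _) _) _)
  have hA_pos : 0 < A := lt_of_lt_of_le (Real.rpow_pos_of_pos ha_pos _) haA
  refine le_trans (ciInf_le hbdd (x j k)) ?_
  -- tail sum
  set T : ℝ := ∑' j', if j' = j then 0 else (∑' k', ‖x j' k'‖ ^ q) ^ (p / q) with hT_def
  have htail_s : Summable (fun j' => if j' = j then (0:ℝ)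
      else (∑' k', ‖x j' k'‖ ^ q) ^ (p / q)) := by
    refine Summable.of_nonneg_of_le ?_ ?_ hx2
    · intro n; by_cases h : n = j <;>
        simp [h, Real.rpow_nonneg (tsum_nonneg fun _ => Real.rpow_nonneg (norm_nonneg _) _)]
    · intro n; by_cases h : n = j <;>
        simp [h, Real.rpow_nonneg (tsum_nonneg fun _ => Real.rpow_nonneg (norm_nonneg _) _)]
  have hA_split : A = a ^ (p/q) + T := Summable.tsum_eq_add_tsum_ite hx2 j
  have hT_nn : 0 ≤ T := tsum_nonneg fun n => by
    by_cases h : n = j <;>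
      simp [h, Real.rpow_nonneg (tsum_nonneg fun _ => Real.rpow_nonneg (norm_nonneg _) _)]
  -- compute the norm of the perturbed vector
  have hrow_j : (∑' k', ‖x j k' - if j = j ∧ k' = k then x j k else 0‖ ^ q) = a - c ^ q := by
    have he : (fun k' => ‖x j k' - if j = j ∧ k' = k then x j k else 0‖ ^ q)
        = fun k' => if k' = k then 0 else ‖x j k'‖ ^ q := by
      funext k'
      by_cases h : k' = k
      · simp [h, Real.zero_rpow hq0.ne']
      · simp [h]
    rw [he]
    have h2 := Summable.tsum_eq_add_tsum_ite (hx1 j) k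
    rw [← ha_def] at h2
    linarith
  have houter : (fun j' => (∑' k', ‖x j' k' - if j' = j ∧ k' = k then x j k else 0‖ ^ q) ^ (p/q))
      = fun j' => if j' = j then (a - c ^ q) ^ (p/q)
        else (∑' k', ‖x j' k'‖ ^ q) ^ (p / q) := by
    funext j'
    by_cases h : j' = j
    · rw [h, hrow_j]; simp
    · simp [h]
  have hsplit2 : (fun j' => if j' = j then (a - c ^ q) ^ (p/q)
        else (∑' k', ‖x j' k'‖ ^ q) ^ (p / q))
      = (fun j' => if j' = j then (a - c ^ q) ^ (p/q) else 0)
        + (fun j' => if j' = j then 0 else (∑' k', ‖x j' k'‖ ^ q) ^ (p / q)) := by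
    funext j'; by_cases h : j' = j <;> simp [h]
  have hsum2 : Summable (fun j' => if j' = j then (a - c ^ q) ^ (p/q)
      else (∑' k', ‖x j' k'‖ ^ q) ^ (p / q)) := by
    rw [hsplit2]; exact ((hasSum_ite_eq j _).summable).add htail_s
  have hnormy : lpqNorm p q (fun j' k' => x j' k' - if j' = j ∧ k' = k then x j k else 0)
      = ((a - c ^ q) ^ (p/q) + T) ^ (1/p) := by
    rw [lpqNorm, houter]
    congr 1
    rw [Summable.tsum_eq_add_tsum_ite hsum2 j]
    congr 1
    · simp
    · rw [hT_def]
      exact tsum_congr fun n => by by_cases h : n = j <;> simp [h]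
  rw [hnormy]
  have hxA : lpqNorm p q x = A ^ (1/p) := rfl
  have hdel : lpqDelta q x j = a ^ (1/q) := rfl
  rw [hxA, hdel]
  set u : ℝ := a ^ (p/q) / A with hu_def
  set v : ℝ := c ^ q / a with hv_def
  have hu0 : 0 < u := div_pos (Real.rpow_pos_of_pos ha_pos _) hA_pos
  have hu1 : u ≤ 1 := (div_le_one hA_pos).mpr haA
  have hv0 : 0 < v := div_pos hbpos ha_pos
  have hv1 : v ≤ 1 := (div_le_one ha_pos).mpr hba
  set m : ℝ := min 1 (p/q) with hm_def
  have hm0 : 0 < m := lt_min one_pos (by positivity)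
  have hm1 : m ≤ 1 := min_le_left _ _
  set t : ℝ := m * u * v with ht_def
  have ht0 : 0 ≤ t := by positivity
  have ht1 : t ≤ 1 := by
    rw [ht_def]
    exact mul_le_one₀ (mul_le_one₀ hm1 hu0.le hu1) hv0.le hv1
  have hstep1 : (a - c ^ q) ^ (p/q) + T ≤ A * (1 - t) := by
    have h1 : a - c ^ q = a * (1 - v) := by rw [hv_def]; field_simp
    have h2 : (a * (1 - v)) ^ (p/q) = a ^ (p/q) * (1 - v) ^ (p/q) :=
      Real.mul_rpow ha_pos.le (by linarith)
    have h3 : (1 - v) ^ (p/q) ≤ 1 - m * v := bern_le_one _ _ (by positivity) hv0.le hv1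
    have h4 : a ^ (p/q) * (1 - v) ^ (p/q) ≤ a ^ (p/q) * (1 - m * v) :=
      mul_le_mul_of_nonneg_left h3 (Real.rpow_nonneg ha_pos.le _)
    have huA : u * A = a ^ (p/q) := by rw [hu_def]; field_simp
    have h5 : A * (1 - t) = a ^ (p/q) * (1 - m * v) + T := by
      rw [ht_def]; linear_combination hA_split - (m*v) * huA
    rw [h1, h2, h5]
    linarith
  have hstep2 : ((a - c ^ q) ^ (p/q) + T) ^ (1/p) ≤ A ^ (1/p) * (1 - (1/p) * t) := by
    have hnn2 : 0 ≤ (a - c ^ q) ^ (p/q) + T :=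
      add_nonneg (Real.rpow_nonneg (by linarith) _) hT_nn
    have hple : (1:ℝ)/p ≤ 1 := by
      rw [div_le_one hp0]; linarith
    calc ((a - c ^ q) ^ (p/q) + T) ^ (1/p)
        ≤ (A * (1 - t)) ^ (1/p) := Real.rpow_le_rpow hnn2 hstep1 (by positivity)
      _ = A ^ (1/p) * (1 - t) ^ (1/p) := Real.mul_rpow hA_pos.le (by linarith)
      _ ≤ A ^ (1/p) * (1 - min 1 (1/p) * t) :=
          mul_le_mul_of_nonneg_left (bern_le_one _ _ (by positivity) ht0 ht1)
            (Real.rpow_nonneg hA_pos.le _)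
      _ = A ^ (1/p) * (1 - (1/p) * t) := by rw [min_eq_right hple]
  refine le_trans hstep2 ?_
  have hFval : (a ^ (1/q)) ^ (p - q) * c ^ (q - 1) / (A ^ (1/p)) ^ (p - 1)
      = u ^ (1 - 1/p) * v ^ (1 - 1/q) := by
    have hL : 0 < (a ^ (1/q)) ^ (p - q) * c ^ (q - 1) / (A ^ (1/p)) ^ (p - 1) :=
      div_pos (mul_pos (Real.rpow_pos_of_pos (Real.rpow_pos_of_pos ha_pos _) _)
        (Real.rpow_pos_of_pos hcpos _))
        (Real.rpow_pos_of_pos (Real.rpow_pos_of_pos hA_pos _) _)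
    have hR : 0 < u ^ (1 - 1/p) * v ^ (1 - 1/q) :=
      mul_pos (Real.rpow_pos_of_pos hu0 _) (Real.rpow_pos_of_pos hv0 _)
    rw [← Real.exp_log hL, ← Real.exp_log hR]
    congr 1
    rw [Real.log_div (mul_pos (Real.rpow_pos_of_pos (Real.rpow_pos_of_pos ha_pos _) _)
        (Real.rpow_pos_of_pos hcpos _)).ne'
        (Real.rpow_pos_of_pos (Real.rpow_pos_of_pos hA_pos _) _).ne',
      Real.log_mul (Real.rpow_pos_of_pos (Real.rpow_pos_of_pos ha_pos _) _).ne'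
        (Real.rpow_pos_of_pos hcpos _).ne',
      Real.log_mul (Real.rpow_pos_of_pos hu0 _).ne' (Real.rpow_pos_of_pos hv0 _).ne',
      Real.log_rpow (Real.rpow_pos_of_pos ha_pos _), Real.log_rpow hcpos,
      Real.log_rpow (Real.rpow_pos_of_pos hA_pos _), Real.log_rpow hu0, Real.log_rpow hv0,
      Real.log_rpow ha_pos, Real.log_rpow hA_pos, hu_def, hv_def,
      Real.log_div (Real.rpow_pos_of_pos ha_pos _).ne' hA_pos.ne',
      Real.log_div hbpos.ne' ha_pos.ne',
      Real.log_rpow ha_pos, Real.log_rpow hcpos]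
    field_simp
    ring
  rw [hFval]
  have hsp : 1 ≤ (1 - 1/p) * max p' q' := by
    have h1 : 1 - 1/p = 1/p' := by linarith
    rw [h1]
    calc (1:ℝ) = 1/p' * p' := by field_simp
      _ ≤ 1/p' * max p' q' :=
        mul_le_mul_of_nonneg_left (le_max_left p' q') (by positivity)
  have hsq : 1 ≤ (1 - 1/q) * max p' q' := by
    have h1 : 1 - 1/q = 1/q' := by linarith
    rw [h1]
    calc (1:ℝ) = 1/q' * q' := by field_simp
      _ ≤ 1/q' * max p' q' :=
        mul_le_mul_of_nonneg_left (le_max_right p' q') (by positivity)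
  have hFs : (u ^ (1 - 1/p) * v ^ (1 - 1/q)) ^ (max p' q') ≤ u * v := by
    rw [Real.mul_rpow (Real.rpow_nonneg hu0.le _) (Real.rpow_nonneg hv0.le _),
      ← Real.rpow_mul hu0.le, ← Real.rpow_mul hv0.le]
    refine mul_le_mul ?_ ?_ (Real.rpow_nonneg hv0.le _) hu0.le
    · calc u ^ ((1 - 1/p) * max p' q') ≤ u ^ (1:ℝ) :=
          Real.rpow_le_rpow_of_exponent_ge hu0 hu1 hsp
        _ = u := Real.rpow_one u
    · calc v ^ ((1 - 1/q) * max p' q') ≤ v ^ (1:ℝ) :=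
          Real.rpow_le_rpow_of_exponent_ge hv0 hv1 hsq
        _ = v := Real.rpow_one v
  have hmc : (1/p) * m = min (1/p) (1/q) := by
    rw [hm_def, mul_min_of_nonneg _ _ (by positivity : (0:ℝ) ≤ 1/p)]
    congr 1
    · rw [mul_one]
    · field_simp
  have hfinal : min (1/p) (1/q) * ((u ^ (1 - 1/p) * v ^ (1 - 1/q)) ^ max p' q')
      ≤ (1/p) * t := by
    calc min (1/p) (1/q) * ((u ^ (1 - 1/p) * v ^ (1 - 1/q)) ^ max p' q')
        ≤ min (1/p) (1/q) * (u * v) := by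
          refine mul_le_mul_of_nonneg_left hFs ?_
          exact le_min (by positivity) (by positivity)
      _ = (1/p) * t := by rw [← hmc, ht_def]; ring
  exact mul_le_mul_of_nonneg_left (sub_le_sub_left hfinal 1) (Real.rpow_nonneg hA_pos.le _)
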